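/- For the automaton B_n = A(n-2, 1) with n > 3 states, the subset S = C_b = {q₀, s₁} has the property that every word v with |S·v⁻¹| > |S| has length at least 2n - 3; hence the shortest extension word for S has length 2(n-2)+1 = 2n-3 > n, disproving the Extension conjecture. -/

import Mathlib

/-- State set of the automaton `A(m,k)`: `Sum.inl i` is `qᵢ` (i = 0,…,m) and
`Sum.inr j` is `s_{j+1}` (j = 0,…,k-1). -/
abbrev QA (m k : ℕ) := Fin (m + 1) ⊕ Fin k

/-- Transition function of `A(m,k)`; letter `false` is `a`, letter `true` is `b`.
`a`: qᵢ → q_{i+1 mod m+1}, sⱼ → q₂.  `b`: q₀ → s₁, sⱼ → s_{j+1} (j < k), s_k → q₀;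
all other transitions are self-loops. -/
def deltaA (m k : ℕ) : QA m k → Bool → QA m k
  | Sum.inl i, false => Sum.inl (i + 1)
  | Sum.inr _, false => Sum.inl 2
  | Sum.inl i, true =>
      if i = 0 then (if h : 0 < k then Sum.inr ⟨0, h⟩ else Sum.inl 0) else Sum.inl i
  | Sum.inr j, true =>
      if h : (j : ℕ) + 1 < k then Sum.inr ⟨(j : ℕ) + 1, h⟩ else Sum.inl 0

/-- Action of a word on a state of `A(m,k)`. -/
def actA (m k : ℕ) (q : QA m k) (w : List Bool) : QA m k := w.foldl (deltaA m k) q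

/-- Preimage `S·w⁻¹ = {q : q·w ∈ S}`. -/
def preimA (m k : ℕ) (S : Finset (QA m k)) (w : List Bool) : Finset (QA m k) :=
  Finset.univ.filter fun q => actA m k q w ∈ S

/-- `C_b = {q₀, s₁, …, s_k}`, the set of states moved by `b`. -/
def Cb (m k : ℕ) : Finset (QA m k) :=
  insert (Sum.inl 0) ((Finset.univ : Finset (Fin k)).image Sum.inr)

/-! ### Auxiliary development for `A(m,1)` -/

namespace Ext

variable (m : ℕ)

/-- Predecessor in the `a`-cycle. -/
def pd (i : Fin (m+1)) : Fin (m+1) := ⟨if i.val = 0 then m else i.val - 1, by split <;> omega⟩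

/-- Number of backwards `a`-steps from `qᵢ` to `q₂`. -/
def rr (i : Fin (m+1)) : ℕ := if 2 ≤ i.val then i.val - 2 else i.val + m - 1

/-- Shapes of the sets arising as preimages of `{q₀, s₁}`. -/
inductive Sh where
  | emp | sOnly
  | q (i : Fin (m+1))
  | qs (i : Fin (m+1))
  | qq (i j : Fin (m+1))

def toSet : Sh m → Finset (QA m 1)
  | .emp => ∅
  | .sOnly => {Sum.inr 0}
  | .q i => {Sum.inl i}
  | .qs i => {Sum.inl i, Sum.inr 0}
  | .qq i j => {Sum.inl i, Sum.inl j}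

def Good : Sh m → Prop
  | .qq i j => i ≠ j
  | _ => True

def fsh : Sh m → ℕ
  | .emp => 2*(m+1)
  | .sOnly => 2*(m+1)
  | .q i => rr m i + 1 + (m+1)
  | .qs i => if i.val = 0 then 2*(m+1) - 1 else 2 + min (rr m i) (m-1)
  | .qq i j => 1 + min (rr m i) (rr m j)

def stepB : Sh m → Sh m
  | .emp => .emp
  | .sOnly => .q 0
  | .q i => if i.val = 0 then .sOnly else .q i
  | .qs i => if i.val = 0 then .qs i else .qq i 0
  | .qq i j => if i.val = 0 then .qs j else if j.val = 0 then .qs i else .qq i j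

def stepA : Sh m → Option (Sh m)
  | .emp => some .emp
  | .sOnly => some .emp
  | .q i => some (if i.val = 2 then .qs 1 else .q (pd m i))
  | .qs i => some (if i.val = 2 then .qs 1 else .q (pd m i))
  | .qq i j => if i.val = 2 ∨ j.val = 2 then none else some (.qq (pd m i) (pd m j))

variable {m} (hm : 2 ≤ m)

set_option linter.unusedSectionVars false

include hm

lemma val1 : (1 : Fin (m+1)).val = 1 := by
  show 1 % (m+1) = 1
  exact Nat.mod_eq_of_lt (by omega)
lemma val2 : (2 : Fin (m+1)).val = 2 := by
  show 2 % (m+1) = 2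
  exact Nat.mod_eq_of_lt (by omega)

lemma pd_add_one (i : Fin (m+1)) : pd m i + 1 = i := by
  apply Fin.ext
  have h1 : 1 % (m+1) = 1 := Nat.mod_eq_of_lt (by omega)
  show ((pd m i).val + 1 % (m+1)) % (m+1) = i.val
  rw [h1]
  have hi := i.isLt
  by_cases h0 : i.val = 0
  · simp only [pd, if_pos h0, Nat.mod_self]
    omega
  · simp only [pd, if_neg h0]
    rw [Nat.mod_eq_of_lt (by omega)]
    omega

lemma add_one_eq_iff (i t : Fin (m+1)) : i + 1 = t ↔ i = pd m t := by
  constructor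
  · intro h
    have := pd_add_one hm t
    exact add_left_injective 1 (h.trans this.symm)
  · rintro rfl; exact pd_add_one hm t

lemma pd_inj {i j : Fin (m+1)} (h : pd m i = pd m j) : i = j := by
  rw [← pd_add_one hm i, ← pd_add_one hm j, h]

/-! Transition simp lemmas for `k = 1`. -/

omit hm in
lemma delta_inl_a (i : Fin (m+1)) : deltaA m 1 (Sum.inl i) false = Sum.inl (i+1) := rfl
omit hm in
lemma delta_inr_a (j : Fin 1) : deltaA m 1 (Sum.inr j) false = Sum.inl 2 := rfl
omit hm in
lemma delta_inl_b (i : Fin (m+1)) :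
    deltaA m 1 (Sum.inl i) true = if i = 0 then Sum.inr 0 else Sum.inl i := by
  simp [deltaA]
omit hm in
lemma delta_inr_b (j : Fin 1) : deltaA m 1 (Sum.inr j) true = Sum.inl 0 := by
  have : (j : ℕ) = 0 := by omega
  simp [deltaA, this]

/-- One-letter preimage. -/
def preim1 (T : Finset (QA m 1)) (x : Bool) : Finset (QA m 1) :=
  Finset.univ.filter fun q => deltaA m 1 q x ∈ T

omit hm in
lemma preimA_nil (S : Finset (QA m 1)) : preimA m 1 S [] = S := by
  ext q; simp only [preimA, Finset.mem_filter]; simp [actA]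

omit hm in
lemma preimA_cons (S : Finset (QA m 1)) (x : Bool) (v : List Bool) :
    preimA m 1 S (x :: v) = preim1 (preimA m 1 S v) x := by
  ext q; simp only [preimA, preim1, Finset.mem_filter]; simp [actA]

lemma stepB_correct (sh : Sh m) (hg : Good m sh) :
    preim1 (toSet m sh) true = toSet m (stepB m sh) := by
  have v1 := val1 hm
  cases sh with
  | emp =>
      ext x; cases x <;> simp [preim1, toSet, stepB]
  | sOnly =>
      ext x
      cases x with
      | inl i =>
          simp only [preim1, toSet, stepB, Finset.mem_filter, Finset.mem_univ, true_and,
            delta_inl_b, Finset.mem_singleton]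
          by_cases h : i = 0 <;> simp [h]
      | inr j =>
          simp [preim1, toSet, stepB, delta_inr_b, Subsingleton.elim j 0]
  | q t =>
      by_cases ht : t.val = 0
      · have ht' : t = 0 := Fin.ext ht
        subst ht'
        ext x
        cases x with
        | inl i =>
            simp only [preim1, Finset.mem_filter]
            simp only [preim1, toSet, stepB, Finset.mem_filter, Finset.mem_univ, true_and,
              delta_inl_b, if_pos rfl]
            by_cases h : i = 0 <;> simp [h]
        | inr j =>
            simp [preim1, toSet, stepB, delta_inr_b, Subsingleton.elim j 0]
      · have ht' : t ≠ 0 := fun h => ht (by simp [h])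
        ext x
        cases x with
        | inl i =>
            simp only [preim1, toSet, stepB, if_neg ht, Finset.mem_filter, Finset.mem_univ,
              true_and, delta_inl_b, Finset.mem_singleton]
            by_cases h : i = 0 <;> simp [h, ht'.symm]
        | inr j =>
            simp [preim1, toSet, stepB, if_neg ht, delta_inr_b, Subsingleton.elim j 0, ht'.symm, ht']
  | qs t =>
      by_cases ht : t.val = 0
      · have ht' : t = 0 := Fin.ext ht
        subst ht'
        ext x
        cases x with
        | inl i =>
            simp only [preim1, toSet, stepB, if_pos rfl, Finset.mem_filter, Finset.mem_univ,
              true_and, delta_inl_b, Finset.mem_insert, Finset.mem_singleton]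
            by_cases h : i = 0 <;> simp [h]
        | inr j =>
            simp [preim1, toSet, stepB, if_pos rfl, delta_inr_b, Subsingleton.elim j 0]
      · have ht' : t ≠ 0 := fun h => ht (by simp [h])
        ext x
        cases x with
        | inl i =>
            simp only [preim1, toSet, stepB, if_neg ht, Finset.mem_filter, Finset.mem_univ,
              true_and, delta_inl_b, Finset.mem_insert, Finset.mem_singleton]
            by_cases h : i = 0 <;> simp [h, ht'.symm]
        | inr j =>
            simp [preim1, toSet, stepB, if_neg ht, delta_inr_b, Subsingleton.elim j 0, ht'.symm, ht']
  | qq t u =>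
      have htu : t ≠ u := hg
      by_cases ht : t.val = 0
      · have ht' : t = 0 := Fin.ext ht
        subst ht'
        have hu : u ≠ 0 := fun h => htu h.symm
        ext x
        cases x with
        | inl i =>
            simp only [preim1, toSet, stepB, if_pos rfl, Finset.mem_filter, Finset.mem_univ,
              true_and, delta_inl_b, Finset.mem_insert, Finset.mem_singleton]
            by_cases h : i = 0 <;> simp [h, hu.symm]
        | inr j =>
            simp [preim1, toSet, stepB, if_pos rfl, delta_inr_b, Subsingleton.elim j 0]
      · have ht' : t ≠ 0 := fun h => ht (by simp [h])
        by_cases hu0 : u.val = 0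
        · have hu' : u = 0 := Fin.ext hu0
          subst hu'
          ext x
          cases x with
          | inl i =>
              simp only [preim1, toSet, stepB, if_neg ht, if_pos rfl, Finset.mem_filter,
                Finset.mem_univ, true_and, delta_inl_b, Finset.mem_insert, Finset.mem_singleton]
              by_cases h : i = 0 <;> simp [h, ht'.symm]
          | inr j =>
              simp [preim1, toSet, stepB, if_neg ht, delta_inr_b, Subsingleton.elim j 0, ht']
        · have hu' : u ≠ 0 := fun h => hu0 (by simp [h])
          ext x
          cases x with
          | inl i =>
              simp only [preim1, toSet, stepB, if_neg ht, if_neg hu0, Finset.mem_filter,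
                Finset.mem_univ, true_and, delta_inl_b, Finset.mem_insert, Finset.mem_singleton]
              by_cases h : i = 0 <;> simp [h, ht'.symm, hu'.symm]
          | inr j =>
              simp [preim1, toSet, stepB, if_neg ht, if_neg hu0, delta_inr_b,
                Subsingleton.elim j 0, ht'.symm, hu'.symm, ht', hu']

lemma stepA_correct (sh sh' : Sh m) (h : stepA m sh = some sh') :
    preim1 (toSet m sh) false = toSet m sh' := by
  have v1 := val1 hm
  have v2 := val2 hm
  have key : ∀ i t : Fin (m+1), (Sum.inl (i+1) : QA m 1) = Sum.inl t ↔ i = pd m t := by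
    intro i t
    rw [Sum.inl.injEq]
    exact add_one_eq_iff hm i t
  cases sh with
  | emp =>
      simp only [stepA, Option.some.injEq] at h
      subst h
      ext x; cases x <;> simp [preim1, toSet]
  | sOnly =>
      simp only [stepA, Option.some.injEq] at h
      subst h
      ext x
      cases x with
      | inl i => simp [preim1, toSet, delta_inl_a]
      | inr j => simp [preim1, toSet, delta_inr_a]
  | q t =>
      simp only [stepA, Option.some.injEq] at h
      subst h
      by_cases ht : t.val = 2
      · have ht' : t = 2 := Fin.ext (by rw [ht, v2])
        have hpd : pd m t = 1 := by
          apply Fin.ext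
          rw [v1]
          show (if t.val = 0 then m else t.val - 1) = 1
          rw [if_neg (by omega)]
          omega
        ext x
        cases x with
        | inl i =>
            simp only [if_pos ht, preim1, toSet, Finset.mem_filter, Finset.mem_univ, true_and,
              delta_inl_a, Finset.mem_singleton, Finset.mem_insert, key i t, hpd]
            simp [Sum.inl.injEq]
        | inr j =>
            simp [preim1, toSet, delta_inr_a, ht', v2, Subsingleton.elim j 0, hm]
      · ext x
        cases x with
        | inl i =>
            simp only [if_neg ht, preim1, toSet, Finset.mem_filter, Finset.mem_univ, true_and,
              delta_inl_a, Finset.mem_singleton, key i t]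
            simp
        | inr j =>
            have : (2 : Fin (m+1)) ≠ t := fun h => ht (by rw [← h, v2])
            simp [if_neg ht, preim1, toSet, delta_inr_a, this]
  | qs t =>
      simp only [stepA, Option.some.injEq] at h
      subst h
      by_cases ht : t.val = 2
      · have ht' : t = 2 := Fin.ext (by rw [ht, v2])
        have hpd : pd m t = 1 := by
          apply Fin.ext
          rw [v1]
          show (if t.val = 0 then m else t.val - 1) = 1
          rw [if_neg (by omega)]
          omega
        ext x
        cases x with
        | inl i =>
            simp only [if_pos ht, preim1, toSet, Finset.mem_filter, Finset.mem_univ, true_and,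
              delta_inl_a, Finset.mem_insert, Finset.mem_singleton, key i t, hpd]
            simp [Sum.inl.injEq]
        | inr j =>
            simp [preim1, toSet, delta_inr_a, ht', v2, Subsingleton.elim j 0, hm]
      · ext x
        cases x with
        | inl i =>
            simp only [if_neg ht, preim1, toSet, Finset.mem_filter, Finset.mem_univ, true_and,
              delta_inl_a, Finset.mem_insert, Finset.mem_singleton, key i t]
            simp
        | inr j =>
            have : (2 : Fin (m+1)) ≠ t := fun h => ht (by rw [← h, v2])
            simp [if_neg ht, preim1, toSet, delta_inr_a, this]
  | qq t u =>
      simp only [stepA] at h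
      by_cases hc : t.val = 2 ∨ u.val = 2
      · simp [hc] at h
      · simp only [if_neg hc, Option.some.injEq] at h
        subst h
        push_neg at hc
        obtain ⟨ht, hu⟩ := hc
        ext x
        cases x with
        | inl i =>
            simp only [preim1, toSet, Finset.mem_filter, Finset.mem_univ, true_and,
              delta_inl_a, Finset.mem_insert, Finset.mem_singleton, Sum.inl.injEq,
              add_one_eq_iff hm i t, add_one_eq_iff hm i u]
        | inr j =>
            have h1 : (2 : Fin (m+1)) ≠ t := fun h => ht (by rw [← h, v2])
            have h2 : (2 : Fin (m+1)) ≠ u := fun h => hu (by rw [← h, v2])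
            simp [preim1, toSet, delta_inr_a, h1, h2]

lemma good_stepB (sh : Sh m) (hg : Good m sh) : Good m (stepB m sh) := by
  cases sh with
  | emp => trivial
  | sOnly => trivial
  | q i => simp only [stepB]; split <;> trivial
  | qs i =>
      simp only [stepB]; split
      · trivial
      · exact fun h => ‹¬ i.val = 0› (by rw [h]; rfl)
  | qq i j =>
      simp only [stepB]; split
      · trivial
      · split
        · trivial
        · exact hg

lemma good_stepA (sh sh' : Sh m) (hg : Good m sh) (h : stepA m sh = some sh') :
    Good m sh' := by
  cases sh with
  | emp => simp only [stepA, Option.some.injEq] at h; subst h; trivial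
  | sOnly => simp only [stepA, Option.some.injEq] at h; subst h; trivial
  | q i => simp only [stepA, Option.some.injEq] at h; subst h; split <;> trivial
  | qs i => simp only [stepA, Option.some.injEq] at h; subst h; split <;> trivial
  | qq i j =>
      simp only [stepA] at h
      split at h
      · exact absurd h (by simp)
      · simp only [Option.some.injEq] at h; subst h
        exact fun he => hg (pd_inj hm he)

lemma rr_le (i : Fin (m+1)) : rr m i ≤ m := by
  have := i.isLt
  simp only [rr]; split <;> omega

lemma rr_pd (i : Fin (m+1)) (h : i.val ≠ 2) : rr m (pd m i) + 1 = rr m i := by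
  have := i.isLt
  simp only [rr, pd]
  split_ifs <;> omega

lemma fsh_stepB (sh : Sh m) (hg : Good m sh) : fsh m sh ≤ fsh m (stepB m sh) + 1 := by
  have hr0 : rr m 0 = m - 1 := by simp [rr]
  cases sh with
  | emp => simp only [stepB, fsh]; omega
  | sOnly => simp only [stepB, fsh, hr0]; omega
  | q i =>
      have hri := rr_le hm i
      simp only [stepB]
      split <;> simp only [fsh] <;> omega
  | qs i =>
      simp only [stepB]
      split
      · simp only [fsh]; omega
      · rename_i h0
        simp only [fsh, hr0, if_neg h0]
        omega
  | qq i j =>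
      have hri := rr_le hm i
      have hrj := rr_le hm j
      simp only [stepB]
      split
      · rename_i h0
        have hj : j ≠ 0 := fun h => hg (by rw [h]; exact Fin.ext h0)
        have hj0 : j.val ≠ 0 := fun h => hj (Fin.ext h)
        have hri' : rr m i = m - 1 := by unfold rr; rw [h0, if_neg (by omega)]; omega
        simp only [fsh, if_neg hj0]
        omega
      · split
        · rename_i h0 h1
          have hi0 : i.val ≠ 0 := h0
          have hrj' : rr m j = m - 1 := by unfold rr; rw [h1, if_neg (by omega)]; omega
          simp only [fsh, if_neg hi0]
          omega
        · simp only [fsh]; omega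

lemma fsh_stepA (sh sh' : Sh m) (hg : Good m sh) (h : stepA m sh = some sh') :
    fsh m sh ≤ fsh m sh' + 1 := by
  have v1 := val1 hm
  have hr1 : rr m 1 = m := by unfold rr; rw [v1, if_neg (by omega)]; omega
  cases sh with
  | emp => simp only [stepA, Option.some.injEq] at h; subst h; simp [fsh]
  | sOnly => simp only [stepA, Option.some.injEq] at h; subst h; simp [fsh]
  | q i =>
      simp only [stepA, Option.some.injEq] at h; subst h
      split
      · rename_i h2
        have hzz : rr m i = 0 := by unfold rr; rw [h2, if_pos (by omega)]
        simp only [fsh, v1]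
        rw [if_neg (by omega)]
        omega
      · rename_i h2
        have := rr_pd hm i h2
        simp only [fsh]
        omega
  | qs i =>
      simp only [stepA, Option.some.injEq] at h; subst h
      by_cases h2 : i.val = 2
      · rw [if_pos h2]
        have hi0 : i.val ≠ 0 := by omega
        have hzz : rr m i = 0 := by unfold rr; rw [h2, if_pos (by omega)]
        simp only [fsh, v1]
        rw [if_neg hi0, if_neg (by omega)]
        omega
      · rw [if_neg h2]
        have hpd := rr_pd hm i h2
        have hle := rr_le hm (pd m i)
        simp only [fsh]
        by_cases h0 : i.val = 0
        · have hmi : rr m i = m - 1 := by unfold rr; rw [h0, if_neg (by omega)]; omega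
          rw [if_pos h0]
          omega
        · rw [if_neg h0]
          omega
  | qq i j =>
      simp only [stepA] at h
      split at h
      · exact absurd h (by simp)
      · simp only [Option.some.injEq] at h; subst h
        rename_i hc
        push_neg at hc
        have h1 := rr_pd hm i hc.1
        have h2 := rr_pd hm j hc.2
        simp only [fsh]
        omega

lemma stepA_none (sh : Sh m) (h : stepA m sh = none) : fsh m sh ≤ 1 := by
  cases sh with
  | emp => simp [stepA] at h
  | sOnly => simp [stepA] at h
  | q i => simp [stepA] at h
  | qs i => simp [stepA] at h
  | qq i j =>
      simp only [stepA] at h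
      split at h
      · rename_i hc
        simp only [fsh]
        rcases hc with hc | hc
        · have h0 : rr m i = 0 := by unfold rr; rw [hc, if_pos (by omega)]
          omega
        · have h0 : rr m j = 0 := by unfold rr; rw [hc, if_pos (by omega)]
          omega
      · simp at h

lemma card_toSet (sh : Sh m) : (toSet m sh).card ≤ 2 := by
  cases sh with
  | emp => simp [toSet]
  | sOnly => simp [toSet]
  | q i => simp [toSet]
  | qs i =>
      simp only [toSet]
      exact (Finset.card_insert_le _ _).trans (by simp)
  | qq i j =>
      simp only [toSet]
      exact (Finset.card_insert_le _ _).trans (by simp)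

lemma invariant (v : List Bool) :
    2*m+1 ≤ v.length ∨
      ∃ sh : Sh m, Good m sh ∧
        preimA m 1 {Sum.inl 0, Sum.inr 0} v = toSet m sh ∧
        2*m+1 ≤ fsh m sh + v.length := by
  induction v with
  | nil =>
      right
      refine ⟨.qs 0, trivial, ?_, ?_⟩
      · rw [preimA_nil]; rfl
      · simp [fsh]; omega
  | cons x v ih =>
      rcases ih with h | ⟨sh, hg, he, hf⟩
      · left; simp only [List.length_cons]; omega
      · rw [preimA_cons, he]
        cases x with
        | true =>
            right
            refine ⟨stepB m sh, good_stepB hm sh hg, stepB_correct hm sh hg, ?_⟩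
            have := fsh_stepB hm sh hg
            simp only [List.length_cons]
            omega
        | false =>
            cases h : stepA m sh with
            | none =>
                left
                have := stepA_none hm sh h
                simp only [List.length_cons]
                omega
            | some sh' =>
                right
                refine ⟨sh', good_stepA hm sh sh' hg h, stepA_correct hm sh sh' h, ?_⟩
                have := fsh_stepA hm sh sh' hg h
                simp only [List.length_cons]
                omega

end Ext

theorem stmt5 (n : ℕ) (hn : 3 < n) :
    ∀ v : List Bool,
      (({Sum.inl 0, Sum.inr 0} : Finset (QA (n - 2) 1)).card <
        (preimA (n - 2) 1 {Sum.inl 0, Sum.inr 0} v).card) →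
      2 * n - 3 ≤ v.length := by
  intro v hcard
  have hm : 2 ≤ n - 2 := by omega
  rcases Ext.invariant hm v with h | ⟨sh, hg, he, _⟩
  · omega
  · exfalso
    rw [he] at hcard
    have h2 : (({Sum.inl 0, Sum.inr 0} : Finset (QA (n - 2) 1)).card) = 2 := by
      rw [Finset.card_insert_of_notMem (by simp), Finset.card_singleton]
    have := Ext.card_toSet hm sh
    omega
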